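/- Let p be a prime number, let m ≥ 0 be an integer, let F be a finite abelian group with the discrete topology, and let G = F × (ℤ_p)^m with the product topology, where ℤ_p denotes the ring of p-adic integers with its usual (profinite) topology. Let θ : G → G be a continuous group homomorphism. If the cokernel G / im(θ) is finite, then the kernel ker(θ) is finite. -/

import Mathlib

open PadicInt

/-- A continuous additive endomorphism of `ℤ_p^m` is `ℤ_p`-linear. -/
lemma padic_addHom_smul {p : ℕ} [Fact p.Prime] {m : ℕ}
    (A : (Fin m → ℤ_[p]) →+ (Fin m → ℤ_[p])) (hA : Continuous A)
    (c : ℤ_[p]) (x : Fin m → ℤ_[p]) : A (c • x) = c • A x := by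
  have h : (fun c : ℤ_[p] => A (c • x)) = fun c : ℤ_[p] => c • A x := by
    refine PadicInt.denseRange_intCast.equalizer
      (hA.comp ((continuous_id.smul continuous_const)))
      ((continuous_id.smul continuous_const)) ?_
    funext n
    simp only [Function.comp_apply, Int.cast_smul_eq_zsmul, map_zsmul]
  exact congrFun h c

/-- Every `p`-adic number becomes integral after multiplying by a power of `p`. -/
lemma exists_pow_mul_norm_le_one {p : ℕ} [hp : Fact p.Prime] (q : ℚ_[p]) :
    ∃ k : ℕ, ∀ l : ℕ, k ≤ l → ‖(p : ℚ_[p]) ^ l * q‖ ≤ 1 := by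
  have hnorm : ∀ l : ℕ, ‖(p : ℚ_[p]) ^ l * q‖ = ((p : ℝ)⁻¹) ^ l * ‖q‖ := by
    intro l
    rw [_root_.norm_mul, _root_.norm_pow, Padic.norm_p]
  rcases eq_or_ne q 0 with rfl | hq
  · exact ⟨0, fun l _ => by simp⟩
  have hq' : 0 < ‖q‖ := norm_pos_iff.mpr hq
  have hp1 : (1 : ℝ) < p := by exact_mod_cast hp.out.one_lt
  have hinv : (p : ℝ)⁻¹ < 1 := inv_lt_one_of_one_lt₀ hp1
  have hinv0 : 0 ≤ (p : ℝ)⁻¹ := by positivity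
  obtain ⟨k, hk⟩ := exists_pow_lt_of_lt_one (by positivity : (0:ℝ) < ‖q‖⁻¹) hinv
  refine ⟨k, fun l hl => ?_⟩
  rw [hnorm]
  calc ((p:ℝ)⁻¹) ^ l * ‖q‖ ≤ ((p:ℝ)⁻¹) ^ k * ‖q‖ :=
      mul_le_mul_of_nonneg_right (pow_le_pow_of_le_one hinv0 hinv.le hl) (norm_nonneg q)
    _ ≤ ‖q‖⁻¹ * ‖q‖ := mul_le_mul_of_nonneg_right hk.le (norm_nonneg q)
    _ = 1 := inv_mul_cancel₀ hq'.ne'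

/-- The Claim inside the proof of Proposition 3.6: let `G = F × (ℤ_p)^m` with `F` a finite
(discrete) abelian group and `ℤ_p` the `p`-adic integers.  If a continuous endomorphism
`θ : G → G` has finite cokernel, then it has finite kernel. -/
theorem finite_kernel_of_finite_cokernel_profinite
    (p : ℕ) [Fact p.Prime] (m : ℕ)
    (F : Type*) [AddCommGroup F] [Finite F] [TopologicalSpace F] [DiscreteTopology F]
    (θ : F × (Fin m → ℤ_[p]) →+ F × (Fin m → ℤ_[p])) (hθ : Continuous θ)
    (hcoker : Finite ((F × (Fin m → ℤ_[p])) ⧸ θ.range)) :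
    Finite θ.ker := by
  classical
  have hp : Fact p.Prime := ‹_›
  -- the additive endomorphism of `ℤ_p^m` induced by `θ`
  let A : (Fin m → ℤ_[p]) →+ (Fin m → ℤ_[p]) :=
  { toFun := fun x => (θ (0, x)).2
    map_zero' := by show (θ 0).2 = 0; rw [map_zero]; rfl
    map_add' := fun x y => by
      have h : ((0:F), x + y) = ((0:F), x) + ((0:F), y) := by simp
      show (θ (0, x + y)).2 = (θ (0, x)).2 + (θ (0, y)).2
      rw [h, map_add]; rfl }
  have hAc : Continuous A := continuous_snd.comp (hθ.comp (Continuous.prodMk_right (0:F)))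
  -- the `F → ℤ_p^m` component of `θ` vanishes, since `ℤ_p^m` is torsion-free
  have hne : Nonempty F := ⟨0⟩
  have hF : ∀ f : F, (θ (f, 0)).2 = 0 := by
    intro f
    have hn : Nat.card F • ((f, (0 : Fin m → ℤ_[p])) : F × (Fin m → ℤ_[p])) = 0 := by
      rw [Prod.smul_mk, card_nsmul_eq_zero', smul_zero]
      rfl
    have h0 : Nat.card F • θ (f, 0) = 0 := by rw [← map_nsmul, hn, map_zero]
    have h2 : Nat.card F • (θ (f, 0)).2 = 0 := congrArg Prod.snd h0
    have hcard : ((Nat.card F : ℤ_[p])) ≠ 0 := by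
      exact_mod_cast (Nat.card_pos (α := F)).ne'
    funext i
    have hi := congrFun h2 i
    rw [Pi.smul_apply, nsmul_eq_mul] at hi
    rcases mul_eq_zero.mp hi with h | h
    · exact absurd h hcard
    · exact h
  -- decomposition of the second component of `θ`
  have hdec : ∀ (f : F) (x : Fin m → ℤ_[p]), (θ (f, x)).2 = A x := by
    intro f x
    have h : ((f, x) : F × (Fin m → ℤ_[p])) = (f, 0) + (0, x) := by simp
    rw [h, map_add, Prod.snd_add, hF, zero_add]
    rfl
  -- the cokernel of `A` is finite
  have hcokA : Finite ((Fin m → ℤ_[p]) ⧸ A.range) := by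
    let ψ : (F × (Fin m → ℤ_[p])) →+ (Fin m → ℤ_[p]) ⧸ A.range :=
      (QuotientAddGroup.mk' A.range).comp (AddMonoidHom.snd _ _)
    have hψ : ∀ g ∈ θ.range, ψ g = 0 := by
      rintro g ⟨x, rfl⟩
      show (((θ x).2 : Fin m → ℤ_[p]) : (Fin m → ℤ_[p]) ⧸ A.range) = 0
      rw [hdec x.1 x.2]
      exact (QuotientAddGroup.eq_zero_iff _).mpr ⟨x.2, rfl⟩
    have hsurj : Function.Surjective (QuotientAddGroup.lift θ.range ψ hψ) := by
      intro q
      obtain ⟨x, rfl⟩ := QuotientAddGroup.mk'_surjective A.range q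
      exact ⟨QuotientAddGroup.mk ((0 : F), x), rfl⟩
    exact Finite.of_surjective _ hsurj
  -- an exponent for the cokernel of `A`
  set n := Nat.card ((Fin m → ℤ_[p]) ⧸ A.range) with hn
  have hnpos : 0 < n := Nat.card_pos
  have hrange : ∀ x : Fin m → ℤ_[p], n • x ∈ A.range := by
    intro x
    have h1 : ((n • x : Fin m → ℤ_[p]) : (Fin m → ℤ_[p]) ⧸ A.range)
        = n • ((x : Fin m → ℤ_[p]) : (Fin m → ℤ_[p]) ⧸ A.range) :=
      map_nsmul (QuotientAddGroup.mk' A.range) n x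
    rw [card_nsmul_eq_zero'] at h1
    exact (QuotientAddGroup.eq_zero_iff _).mp h1
  -- `A` as a `ℤ_p`-linear map, and its matrix
  let L : (Fin m → ℤ_[p]) →ₗ[ℤ_[p]] (Fin m → ℤ_[p]) :=
    { toFun := A, map_add' := A.map_add, map_smul' := fun c x => padic_addHom_smul A hAc c x }
  let M := LinearMap.toMatrix' L
  have hM : ∀ x, A x = M.mulVec x := fun x => by
    show L x = M.mulVec x
    rw [← Matrix.toLin'_apply, Matrix.toLin'_toMatrix']
  let C : ℤ_[p] →+* ℚ_[p] := PadicInt.Coe.ringHom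
  let Mq := M.map C
  -- the induced map over `ℚ_p` is surjective
  have hsurjq : Function.Surjective (Mq.mulVecLin) := by
    intro y
    choose k hk using fun i => exists_pow_mul_norm_le_one (p := p) (y i)
    set K := Finset.univ.sup k with hK
    have hint : ∀ i, ‖(p : ℚ_[p]) ^ K * y i‖ ≤ 1 := fun i =>
      hk i K (Finset.le_sup (Finset.mem_univ i))
    set x' : Fin m → ℤ_[p] := fun i => (⟨(p : ℚ_[p]) ^ K * y i, hint i⟩ : ℤ_[p]) with hx'
    obtain ⟨z, hz⟩ := hrange x'
    have hn0 : ((n : ℚ_[p])) ≠ 0 := by exact_mod_cast hnpos.ne'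
    have hpK : ((p : ℚ_[p])) ^ K ≠ 0 :=
      pow_ne_zero _ (by exact_mod_cast hp.out.ne_zero)
    refine ⟨((n : ℚ_[p]) * (p : ℚ_[p]) ^ K)⁻¹ • (C ∘ z), ?_⟩
    have hcomm : Mq.mulVec (C ∘ z) = C ∘ (M.mulVec z) := by
      funext i; exact (RingHom.map_mulVec C M z i).symm
    show Mq.mulVec _ = y
    rw [Matrix.mulVec_smul, hcomm, ← hM, hz]
    funext i
    have hC : C ((n • x') i) = (n : ℚ_[p]) * ((p : ℚ_[p]) ^ K * y i) := by
      rw [Pi.smul_apply, map_nsmul, nsmul_eq_mul]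
      rfl
    simp only [Pi.smul_apply, Function.comp_apply, smul_eq_mul, hC]
    field_simp
    rw [show C (n • x' i) = (n : ℚ_[p]) * ((p : ℚ_[p]) ^ K * y i) from hC]
    ring
  have hinjq : Function.Injective (Mq.mulVecLin) :=
    (LinearMap.injective_iff_surjective).mpr hsurjq
  -- hence `A` is injective
  have hAker : ∀ x : Fin m → ℤ_[p], A x = 0 → x = 0 := by
    intro x hx
    have h1 : Mq.mulVecLin (C ∘ x) = 0 := by
      funext i
      show (Mq.mulVec (C ∘ x)) i = 0
      rw [← RingHom.map_mulVec C M x i, ← hM, hx]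
      simp
    have h2 : C ∘ x = 0 := hinjq (by rw [h1, map_zero])
    funext i
    have := congrFun h2 i
    exact Subtype.ext this
  -- kernel of `θ` injects into `F`
  have hinj : Function.Injective
      (fun g : θ.ker => ((g : F × (Fin m → ℤ_[p])).1)) := by
    rintro ⟨⟨f1, x1⟩, h1⟩ ⟨⟨f2, x2⟩, h2⟩ h
    simp only at h
    have e1 : x1 = 0 := by
      apply hAker
      rw [← hdec f1 x1]
      exact congrArg Prod.snd (AddMonoidHom.mem_ker.mp h1)
    have e2 : x2 = 0 := by
      apply hAker
      rw [← hdec f2 x2]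
      exact congrArg Prod.snd (AddMonoidHom.mem_ker.mp h2)
    apply Subtype.ext
    simp [h, e1, e2]
  exact Finite.of_injective _ hinj
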